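/- arXiv:1811.12757 — 2 statements merged into one kernel-verified Lean document; each statement's English description precedes it below -/
import Mathlib

section
/- Let S(t,x) = (2πt)^{-k/2} exp(-‖x‖²/(2t)). There exists a constant N₀ > 0 such that for all t > 0 and x, y ∈ ℝ^k, ∫_{ℝ^k} |S(t, x+z) - S(t, y+z)| dz ≤ N₀ · min(‖x - y‖/t^{1/2}, 1). -/
open Real MeasureTheory

noncomputable def heatKernel (k : ℕ) (t : ℝ) (x : EuclideanSpace ℝ (Fin k)) : ℝ :=
  (2 * Real.pi * t) ^ (-(k : ℝ) / 2) * Real.exp (-‖x‖ ^ 2 / (2 * t))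

noncomputable def g1 (t a : ℝ) : ℝ :=
  (2 * Real.pi * t) ^ (-(1 : ℝ) / 2) * Real.exp (-a ^ 2 / (2 * t))

lemma g1_nonneg (t : ℝ) (ht : 0 < t) (a : ℝ) : 0 ≤ g1 t a := by
  unfold g1
  have : (0:ℝ) < 2 * Real.pi * t := by positivity
  positivity

lemma g1_eq (t : ℝ) (ht : 0 < t) (a : ℝ) :
    g1 t a = (2 * Real.pi * t) ^ (-(1 : ℝ) / 2) * Real.exp (-(1 / (2 * t)) * a ^ 2) := by
  unfold g1; ring_nf

lemma integrable_g1 (t : ℝ) (ht : 0 < t) : Integrable (g1 t) := by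
  have h : (0 : ℝ) < 1 / (2 * t) := by positivity
  have := (integrable_exp_neg_mul_sq h).const_mul ((2 * Real.pi * t) ^ (-(1 : ℝ) / 2))
  refine this.congr ?_
  filter_upwards with a
  rw [g1_eq t ht]

lemma integral_g1 (t : ℝ) (ht : 0 < t) : ∫ a, g1 t a = 1 := by
  have h : (0 : ℝ) < 1 / (2 * t) := by positivity
  have h2 : (0 : ℝ) < 2 * Real.pi * t := by positivity
  simp_rw [g1_eq t ht]
  rw [integral_const_mul, integral_gaussian]
  have : Real.pi / (1 / (2 * t)) = 2 * Real.pi * t := by field_simp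
  rw [this, Real.sqrt_eq_rpow, ← Real.rpow_add h2]
  norm_num

lemma g1_le (t : ℝ) (ht : 0 < t) (a : ℝ) : g1 t a ≤ (2 * Real.pi * t) ^ (-(1 : ℝ) / 2) := by
  unfold g1
  have : Real.exp (-a ^ 2 / (2 * t)) ≤ 1 := by
    rw [Real.exp_le_one_iff, neg_div, neg_nonpos]
    positivity
  nlinarith [Real.rpow_pos_of_pos (show (0:ℝ) < 2 * Real.pi * t by positivity) (-(1:ℝ)/2)]

lemma bound_const_le (t : ℝ) (ht : 0 < t) :
    (2 * Real.pi * t) ^ (-(1 : ℝ) / 2) ≤ 1 / (2 * Real.sqrt t) := by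
  have h2 : (0 : ℝ) < 2 * Real.pi * t := by positivity
  rw [neg_div, Real.rpow_neg h2.le, ← Real.sqrt_eq_rpow]
  rw [show (2 * Real.pi * t) = (2 * Real.pi) * t by ring, Real.sqrt_mul (by positivity)]
  rw [one_div, inv_le_inv₀ (by positivity) (by positivity)]
  have : (2 : ℝ) ≤ Real.sqrt (2 * Real.pi) := by
    have h4 : ((2:ℝ))^2 ≤ 2 * Real.pi := by nlinarith [Real.pi_gt_three]
    nlinarith [Real.sq_sqrt (show (0:ℝ) ≤ 2 * Real.pi by positivity),
      Real.sqrt_nonneg (2 * Real.pi)]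
  nlinarith [Real.sqrt_nonneg t, Real.sqrt_pos.mpr ht]

lemma g1_anti (t : ℝ) (ht : 0 < t) {u v : ℝ} (h : v ^ 2 ≤ u ^ 2) : g1 t u ≤ g1 t v := by
  unfold g1
  have hbase : (0:ℝ) ≤ (2 * Real.pi * t) ^ (-(1 : ℝ) / 2) :=
    (Real.rpow_pos_of_pos (by positivity) _).le
  refine mul_le_mul_of_nonneg_left ?_ hbase
  rw [Real.exp_le_exp, div_le_div_iff_of_pos_right (by positivity : (0:ℝ) < 2*t)]
  linarith

lemma setIntegral_g1_translate (t : ℝ) (a m : ℝ) :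
    ∫ z in Set.Ici m, g1 t (z + a) = ∫ z in Set.Ici (m + a), g1 t z := by
  have h := (measurePreserving_add_right volume a).setIntegral_image_emb
    (MeasurableEquiv.addRight a).measurableEmbedding (g1 t) (Set.Ici m)
  simpa [Set.image_add_const_Ici] using h.symm

lemma setIntegral_g1_translate_Iio (t : ℝ) (a m : ℝ) :
    ∫ z in Set.Iio m, g1 t (z + a) = ∫ z in Set.Iio (m + a), g1 t z := by
  have h := (measurePreserving_add_right volume a).setIntegral_image_emb
    (MeasurableEquiv.addRight a).measurableEmbedding (g1 t) (Set.Iio m)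
  simpa [Set.image_add_const_Iio] using h.symm

lemma integrable_g1_shift (t : ℝ) (ht : 0 < t) (a : ℝ) :
    Integrable (fun z => g1 t (z + a)) := (integrable_g1 t ht).comp_add_right a

lemma integral_g1_shift (t : ℝ) (ht : 0 < t) (a : ℝ) :
    ∫ z, g1 t (z + a) = 1 := by
  rw [integral_add_right_eq_self (g1 t) a, integral_g1 t ht]

lemma tv_le_two (t : ℝ) (ht : 0 < t) (a b : ℝ) :
    ∫ z, |g1 t (z + a) - g1 t (z + b)| ≤ 2 := by
  have ia := integrable_g1_shift t ht a
  have ib := integrable_g1_shift t ht b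
  have h1 : ∫ z, |g1 t (z + a) - g1 t (z + b)| ≤
      ∫ z, (g1 t (z + a) + g1 t (z + b)) := by
    refine integral_mono (ia.sub ib).abs (ia.add ib) (fun z => ?_)
    have := abs_sub (g1 t (z + a)) (g1 t (z + b))
    calc |g1 t (z + a) - g1 t (z + b)| ≤ |g1 t (z + a)| + |g1 t (z + b)| := abs_sub _ _
      _ = g1 t (z + a) + g1 t (z + b) := by
          rw [abs_of_nonneg (g1_nonneg t ht _), abs_of_nonneg (g1_nonneg t ht _)]
  rw [integral_add ia ib, integral_g1_shift t ht, integral_g1_shift t ht] at h1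
  linarith

lemma setIntegral_g1_Ico_le (t : ℝ) (ht : 0 < t) {c d : ℝ} (hcd : c ≤ d) :
    ∫ z in Set.Ico c d, g1 t z ≤ (d - c) / (2 * Real.sqrt t) := by
  have hb : ∀ z ∈ Set.Ico c d, ‖g1 t z‖ ≤ 1 / (2 * Real.sqrt t) := by
    intro z _
    rw [Real.norm_eq_abs, abs_of_nonneg (g1_nonneg t ht z)]
    exact (g1_le t ht z).trans (bound_const_le t ht)
  have hfin : volume (Set.Ico c d) < ⊤ := by rw [Real.volume_Ico]; exact ENNReal.ofReal_lt_top
  have := norm_setIntegral_le_of_norm_le_const hfin hb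
  rw [Real.volume_real_Ico_of_le hcd] at this
  calc ∫ z in Set.Ico c d, g1 t z ≤ ‖∫ z in Set.Ico c d, g1 t z‖ := le_abs_self _
    _ ≤ 1 / (2 * Real.sqrt t) * (d - c) := this
    _ = (d - c) / (2 * Real.sqrt t) := by ring

lemma tv_le_lip_ordered (t : ℝ) (ht : 0 < t) {a b : ℝ} (hab : a ≤ b) :
    ∫ z, |g1 t (z + a) - g1 t (z + b)| ≤ (b - a) / Real.sqrt t := by
  set m : ℝ := -(a + b) / 2 with hm
  set c : ℝ := m + a with hc
  set d : ℝ := m + b with hd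
  have hcd : c ≤ d := by simp only [hc, hd]; linarith
  have ia := integrable_g1_shift t ht a
  have ib := integrable_g1_shift t ht b
  have hf : Integrable (fun z => g1 t (z + a) - g1 t (z + b)) := ia.sub ib
  -- sign facts
  have hpos : ∀ z ∈ Set.Ici m, 0 ≤ g1 t (z + a) - g1 t (z + b) := by
    intro z hz
    have hz' : m ≤ z := hz
    have : (z + a) ^ 2 ≤ (z + b) ^ 2 := by nlinarith [hz']
    linarith [g1_anti t ht this]
  have hneg : ∀ z ∈ Set.Iio m, g1 t (z + a) - g1 t (z + b) ≤ 0 := by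
    intro z hz
    have hz' : z < m := hz
    have : (z + b) ^ 2 ≤ (z + a) ^ 2 := by nlinarith [hz']
    linarith [g1_anti t ht this]
  -- split the integral
  have hsplit : ∫ z, |g1 t (z + a) - g1 t (z + b)| =
      (∫ z in Set.Ici m, |g1 t (z + a) - g1 t (z + b)|) +
      (∫ z in Set.Iio m, |g1 t (z + a) - g1 t (z + b)|) := by
    rw [← integral_add_compl measurableSet_Ici hf.abs, Set.compl_Ici]
  have hdisj : Disjoint (Set.Ico c d) (Set.Ici d) :=
    Set.disjoint_left.mpr fun z hz hz' => absurd hz' (not_le.mpr hz.2)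
  have hon : IntegrableOn (g1 t) (Set.Ico c d) := (integrable_g1 t ht).integrableOn
  have hon' : IntegrableOn (g1 t) (Set.Ici d) := (integrable_g1 t ht).integrableOn
  have hon'' : IntegrableOn (g1 t) (Set.Iio c) := (integrable_g1 t ht).integrableOn
  have hIci : (∫ z in Set.Ici m, |g1 t (z + a) - g1 t (z + b)|) =
      ∫ z in Set.Ico c d, g1 t z := by
    rw [setIntegral_congr_fun measurableSet_Ici
      (fun z hz => abs_of_nonneg (hpos z hz))]
    rw [integral_sub ia.restrict ib.restrict,
      setIntegral_g1_translate t a m, setIntegral_g1_translate t b m, ← hc, ← hd,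
      ← Set.Ico_union_Ici_eq_Ici hcd,
      setIntegral_union hdisj measurableSet_Ici hon hon']
    ring
  have hIio : (∫ z in Set.Iio m, |g1 t (z + a) - g1 t (z + b)|) =
      ∫ z in Set.Ico c d, g1 t z := by
    rw [setIntegral_congr_fun measurableSet_Iio
      (fun z hz => abs_of_nonpos (hneg z hz))]
    have : (∫ z in Set.Iio m, -(g1 t (z + a) - g1 t (z + b))) =
        (∫ z in Set.Iio m, g1 t (z + b)) - ∫ z in Set.Iio m, g1 t (z + a) := by
      rw [← integral_sub ib.restrict ia.restrict]
      congr 1 with z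
      ring
    rw [this, setIntegral_g1_translate_Iio t a m, setIntegral_g1_translate_Iio t b m,
      ← hc, ← hd, ← Set.Iio_union_Ico_eq_Iio hcd,
      setIntegral_union ?_ measurableSet_Ico hon'' hon]
    · ring
    · exact Set.disjoint_left.mpr fun z hz hz' => absurd hz'.1 (not_le.mpr hz)
  have hIco := setIntegral_g1_Ico_le t ht hcd
  have hdc : d - c = b - a := by simp only [hc, hd]; ring
  have hst : 0 < Real.sqrt t := Real.sqrt_pos.mpr ht
  rw [hsplit, hIci, hIio]
  rw [hdc] at hIco
  calc (∫ z in Set.Ico c d, g1 t z) + ∫ z in Set.Ico c d, g1 t z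
      ≤ (b - a) / (2 * Real.sqrt t) + (b - a) / (2 * Real.sqrt t) := by linarith
    _ = (b - a) / Real.sqrt t := by field_simp; ring

lemma tv_le_lip (t : ℝ) (ht : 0 < t) (a b : ℝ) :
    ∫ z, |g1 t (z + a) - g1 t (z + b)| ≤ |a - b| / Real.sqrt t := by
  rcases le_total a b with h | h
  · rw [abs_sub_comm, abs_of_nonneg (by linarith : (0:ℝ) ≤ b - a)]
    exact tv_le_lip_ordered t ht h
  · rw [abs_of_nonneg (by linarith : (0:ℝ) ≤ a - b)]
    simp_rw [abs_sub_comm (g1 t (_ + a))]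
    exact tv_le_lip_ordered t ht h

lemma heatKernel_eq_prod (k : ℕ) (t : ℝ) (ht : 0 < t) (v : EuclideanSpace ℝ (Fin k)) :
    heatKernel k t v = ∏ i, g1 t (v i) := by
  unfold heatKernel g1
  have hb : (0:ℝ) < 2 * Real.pi * t := by positivity
  have hnorm : ‖v‖ ^ 2 = ∑ i, v i ^ 2 := by
    rw [EuclideanSpace.norm_eq, Real.sq_sqrt (Finset.sum_nonneg fun i _ => by positivity)]
    exact Finset.sum_congr rfl fun i _ => by rw [Real.norm_eq_abs, sq_abs]
  rw [Finset.prod_mul_distrib, Finset.prod_const, Finset.card_univ, Fintype.card_fin,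
    ← Real.exp_sum]
  congr 1
  · rw [← Real.rpow_natCast ((2 * Real.pi * t) ^ (-(1:ℝ)/2)) k, ← Real.rpow_mul hb.le]
    congr 1
    push_cast
    ring
  · rw [hnorm]
    congr 1
    rw [← Finset.sum_div, ← Finset.sum_neg_distrib]

lemma integrable_prodg (k : ℕ) (t : ℝ) (ht : 0 < t) (c : Fin k → ℝ) :
    Integrable (fun z : Fin k → ℝ => ∏ i, g1 t (c i + z i)) :=
  Integrable.fintype_prod (f := fun i s => g1 t (c i + s))
    (fun i => (integrable_g1 t ht).comp_add_left (c i))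

lemma integral_prodg (k : ℕ) (t : ℝ) (ht : 0 < t) (c : Fin k → ℝ) :
    ∫ z : Fin k → ℝ, ∏ i, g1 t (c i + z i) = 1 := by
  rw [MeasureTheory.volume_pi, MeasureTheory.integral_fintype_prod_eq_prod (fun i s => g1 t (c i + s))]
  have h : ∀ i : Fin k, ∫ s : ℝ, g1 t (c i + s) = 1 := fun i => by
    rw [integral_add_left_eq_self (g1 t) (c i), integral_g1 t ht]
  simp [h]

lemma prodg_nonneg (k : ℕ) (t : ℝ) (ht : 0 < t) (c : Fin k → ℝ) (z : Fin k → ℝ) :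
    0 ≤ ∏ i, g1 t (c i + z i) :=
  Finset.prod_nonneg fun i _ => g1_nonneg t ht _

lemma prod_tv_le_two (k : ℕ) (t : ℝ) (ht : 0 < t) (x y : Fin k → ℝ) :
    ∫ z : Fin k → ℝ, |(∏ i, g1 t (x i + z i)) - ∏ i, g1 t (y i + z i)| ≤ 2 := by
  have ia := integrable_prodg k t ht x
  have ib := integrable_prodg k t ht y
  have h1 : ∫ z : Fin k → ℝ, |(∏ i, g1 t (x i + z i)) - ∏ i, g1 t (y i + z i)| ≤
      ∫ z : Fin k → ℝ, ((∏ i, g1 t (x i + z i)) + ∏ i, g1 t (y i + z i)) := by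
    refine integral_mono (ia.sub ib).abs (ia.add ib) (fun z => ?_)
    calc |(∏ i, g1 t (x i + z i)) - ∏ i, g1 t (y i + z i)|
        ≤ |∏ i, g1 t (x i + z i)| + |∏ i, g1 t (y i + z i)| := abs_sub _ _
      _ = (∏ i, g1 t (x i + z i)) + ∏ i, g1 t (y i + z i) := by
          rw [abs_of_nonneg (prodg_nonneg k t ht x z), abs_of_nonneg (prodg_nonneg k t ht y z)]
  rw [integral_add ia ib, integral_prodg k t ht, integral_prodg k t ht] at h1
  linarith

lemma step_bound (k : ℕ) (t : ℝ) (ht : 0 < t) (x y : Fin k → ℝ) (jf : Fin k)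
    (hagree : ∀ i, i ≠ jf → x i = y i) :
    ∫ z : Fin k → ℝ, |(∏ i, g1 t (x i + z i)) - ∏ i, g1 t (y i + z i)| ≤
      |x jf - y jf| / Real.sqrt t := by
  set h : Fin k → ℝ → ℝ := fun i s =>
    if i = jf then |g1 t (x i + s) - g1 t (y i + s)| else g1 t (x i + s) with hh_def
  have hpt : ∀ z : Fin k → ℝ,
      |(∏ i, g1 t (x i + z i)) - ∏ i, g1 t (y i + z i)| = ∏ i, h i (z i) := by
    intro z
    rw [← Finset.mul_prod_erase Finset.univ (fun i => g1 t (x i + z i)) (Finset.mem_univ jf),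
        ← Finset.mul_prod_erase Finset.univ (fun i => g1 t (y i + z i)) (Finset.mem_univ jf),
        ← Finset.mul_prod_erase Finset.univ (fun i => h i (z i)) (Finset.mem_univ jf)]
    have hR : (∏ i ∈ Finset.univ.erase jf, g1 t (y i + z i)) =
        ∏ i ∈ Finset.univ.erase jf, g1 t (x i + z i) :=
      Finset.prod_congr rfl fun i hi => by rw [hagree i (Finset.ne_of_mem_erase hi)]
    have hhp : (∏ i ∈ Finset.univ.erase jf, h i (z i)) =
        ∏ i ∈ Finset.univ.erase jf, g1 t (x i + z i) :=
      Finset.prod_congr rfl fun i hi => by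
        simp [hh_def, Finset.ne_of_mem_erase hi]
    have hRnn : 0 ≤ ∏ i ∈ Finset.univ.erase jf, g1 t (x i + z i) :=
      Finset.prod_nonneg fun i _ => g1_nonneg t ht _
    rw [hR, hhp, ← sub_mul, abs_mul, abs_of_nonneg hRnn]
    congr 1
    simp [hh_def]
  simp only [hpt]
  rw [MeasureTheory.volume_pi, MeasureTheory.integral_fintype_prod_eq_prod h]
  rw [← Finset.mul_prod_erase Finset.univ (fun i => ∫ s, h i s) (Finset.mem_univ jf)]
  have h1 : (∏ i ∈ Finset.univ.erase jf, ∫ s, h i s) = 1 := by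
    refine Finset.prod_eq_one fun i hi => ?_
    have hne := Finset.ne_of_mem_erase hi
    simp only [hh_def, if_neg hne]
    rw [integral_add_left_eq_self (g1 t) (x i), integral_g1 t ht]
  have h2 : (∫ s, h jf s) = ∫ s, |g1 t (s + x jf) - g1 t (s + y jf)| := by
    simp only [hh_def, if_pos rfl]
    congr 1 with s
    rw [add_comm (x jf) s, add_comm (y jf) s]
  rw [h1, mul_one, h2]
  exact tv_le_lip t ht (x jf) (y jf)

lemma pi_lip (k : ℕ) (t : ℝ) (ht : 0 < t) (x y : Fin k → ℝ) (D : ℝ) (hD0 : 0 ≤ D)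
    (hD : ∀ i, |x i - y i| ≤ D) :
    ∫ z : Fin k → ℝ, |(∏ i, g1 t (x i + z i)) - ∏ i, g1 t (y i + z i)| ≤
      (k : ℝ) * D / Real.sqrt t := by
  set w : ℕ → (Fin k → ℝ) := fun j i => if (i : ℕ) < j then y i else x i with hw_def
  have hw0 : w 0 = x := by funext i; simp [hw_def]
  have hwk : w k = y := by funext i; simp [hw_def, i.isLt]
  have htel : ∀ z : Fin k → ℝ,
      |(∏ i, g1 t (x i + z i)) - ∏ i, g1 t (y i + z i)| ≤
      ∑ j ∈ Finset.range k, |(∏ i, g1 t (w j i + z i)) - ∏ i, g1 t (w (j+1) i + z i)| := by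
    intro z
    have hsum := Finset.sum_range_sub' (fun j => ∏ i, g1 t (w j i + z i)) k
    calc |(∏ i, g1 t (x i + z i)) - ∏ i, g1 t (y i + z i)|
        = |∑ j ∈ Finset.range k,
            ((∏ i, g1 t (w j i + z i)) - ∏ i, g1 t (w (j+1) i + z i))| := by
          rw [hsum, hw0, hwk]
      _ ≤ _ := Finset.abs_sum_le_sum_abs _ _
  have hint : ∀ j, Integrable (fun z : Fin k → ℝ =>
      |(∏ i, g1 t (w j i + z i)) - ∏ i, g1 t (w (j+1) i + z i)|) := fun j =>
    ((integrable_prodg k t ht (w j)).sub (integrable_prodg k t ht (w (j+1)))).abs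
  have hmono : ∫ z : Fin k → ℝ, |(∏ i, g1 t (x i + z i)) - ∏ i, g1 t (y i + z i)| ≤
      ∫ z : Fin k → ℝ, ∑ j ∈ Finset.range k,
        |(∏ i, g1 t (w j i + z i)) - ∏ i, g1 t (w (j+1) i + z i)| :=
    integral_mono ((integrable_prodg k t ht x).sub (integrable_prodg k t ht y)).abs
      (integrable_finset_sum _ (fun j _ => hint j)) htel
  rw [integral_finset_sum _ (fun j _ => hint j)] at hmono
  refine hmono.trans ?_
  have hstep : ∀ j ∈ Finset.range k,
      (∫ z : Fin k → ℝ, |(∏ i, g1 t (w j i + z i)) - ∏ i, g1 t (w (j+1) i + z i)|) ≤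
      D / Real.sqrt t := by
    intro j hj
    have hjk : j < k := Finset.mem_range.mp hj
    set jf : Fin k := ⟨j, hjk⟩ with hjf
    have hagree : ∀ i, i ≠ jf → w j i = w (j+1) i := by
      intro i hi
      have : (i : ℕ) ≠ j := fun hc => hi (Fin.ext hc)
      simp only [hw_def]
      rcases Nat.lt_or_ge (i : ℕ) j with h' | h'
      · rw [if_pos h', if_pos (Nat.lt_succ_of_lt h')]
      · have h'' : ¬ (i : ℕ) < j := not_lt.mpr h'
        have h''' : ¬ (i : ℕ) < j + 1 := by omega
        rw [if_neg h'', if_neg h''']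
    have hwj : w j jf = x jf := by simp [hw_def, hjf]
    have hwj1 : w (j+1) jf = y jf := by simp [hw_def, hjf]
    have := step_bound k t ht (w j) (w (j+1)) jf hagree
    rw [hwj, hwj1] at this
    refine this.trans ?_
    gcongr
    exact hD jf
  calc (∑ j ∈ Finset.range k, ∫ z : Fin k → ℝ,
        |(∏ i, g1 t (w j i + z i)) - ∏ i, g1 t (w (j+1) i + z i)|)
      ≤ ∑ j ∈ Finset.range k, D / Real.sqrt t := Finset.sum_le_sum hstep
    _ = (k : ℝ) * D / Real.sqrt t := by rw [Finset.sum_const, Finset.card_range]; ring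

lemma coord_abs_le_norm (k : ℕ) (v : EuclideanSpace ℝ (Fin k)) (i : Fin k) :
    |v i| ≤ ‖v‖ := by
  rw [EuclideanSpace.norm_eq]
  calc |v i| = Real.sqrt (‖v i‖ ^ 2) := by
        rw [Real.norm_eq_abs, sq_abs, Real.sqrt_sq_eq_abs]
    _ ≤ _ := Real.sqrt_le_sqrt (Finset.single_le_sum
        (f := fun j => ‖v j‖ ^ 2) (fun j _ => by positivity) (Finset.mem_univ i))

theorem stmt_5 (k : ℕ) (hk : 1 ≤ k) :
    ∃ N₀ : ℝ, 0 < N₀ ∧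
      ∀ t : ℝ, 0 < t → ∀ x y : EuclideanSpace ℝ (Fin k),
        ∫ z : EuclideanSpace ℝ (Fin k), |heatKernel k t (x + z) - heatKernel k t (y + z)| ≤
          N₀ * min (‖x - y‖ / t ^ ((1 : ℝ) / 2)) 1 := by
  refine ⟨(k : ℝ) + 2, by positivity, ?_⟩
  intro t ht x y
  have hsq : t ^ ((1 : ℝ) / 2) = Real.sqrt t := (Real.sqrt_eq_rpow t).symm
  have hst : 0 < Real.sqrt t := Real.sqrt_pos.mpr ht
  set es := MeasurableEquiv.toLp 2 (Fin k → ℝ) with hes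
  have htr : ∫ z : EuclideanSpace ℝ (Fin k),
        |heatKernel k t (x + z) - heatKernel k t (y + z)| =
      ∫ z : Fin k → ℝ, |heatKernel k t (x + es z) - heatKernel k t (y + es z)| := by
    have hmp : MeasurePreserving es volume volume :=
      MeasurePreserving.symm _ (EuclideanSpace.volume_preserving_symm_measurableEquiv_toLp (Fin k))
    exact (hmp.integral_comp (MeasurableEquiv.measurableEmbedding _)
      (fun z => |heatKernel k t (x + z) - heatKernel k t (y + z)|)).symm
  have hcoord : ∀ (c : EuclideanSpace ℝ (Fin k)) (z : Fin k → ℝ) (i : Fin k),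
      (c + es z) i = c i + z i := by
    intro c z i
    rfl
  have hfa : ∀ (c : EuclideanSpace ℝ (Fin k)) (z : Fin k → ℝ),
      heatKernel k t (c + es z) = ∏ i, g1 t (c i + z i) := by
    intro c z
    rw [heatKernel_eq_prod k t ht]
    exact Finset.prod_congr rfl fun i _ => by rw [hcoord]
  rw [htr]
  simp only [hfa]
  set xc : Fin k → ℝ := fun i => x i with hxc
  set yc : Fin k → ℝ := fun i => y i with hyc
  have h2 : ∫ z : Fin k → ℝ, |(∏ i, g1 t (xc i + z i)) - ∏ i, g1 t (yc i + z i)| ≤ 2 :=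
    prod_tv_le_two k t ht xc yc
  have hcd : ∀ i : Fin k, |xc i - yc i| ≤ ‖x - y‖ := by
    intro i
    have : xc i - yc i = (x - y) i := rfl
    rw [this]
    exact coord_abs_le_norm k (x - y) i
  have hlip := pi_lip k t ht xc yc ‖x - y‖ (norm_nonneg _) hcd
  rw [hsq]
  rcases le_total (‖x - y‖ / Real.sqrt t) 1 with hc | hc
  · rw [min_eq_left hc]
    refine hlip.trans ?_
    have h0 : 0 ≤ ‖x - y‖ / Real.sqrt t := div_nonneg (norm_nonneg _) hst.le
    have : (k : ℝ) * ‖x - y‖ / Real.sqrt t = (k : ℝ) * (‖x - y‖ / Real.sqrt t) := by ring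
    rw [this]
    have hk2 : (k : ℝ) ≤ (k : ℝ) + 2 := by linarith
    exact mul_le_mul_of_nonneg_right hk2 h0
  · rw [min_eq_right hc]
    refine h2.trans ?_
    have : (0:ℝ) ≤ (k : ℝ) := Nat.cast_nonneg k
    linarith
end

section
/- Let k ≥ 1 and β ∈ (0, min(2,k)). The function g(x) := ∫_{ℝ^k} ‖z‖^{-β} S(t, x - z) dz (for fixed t > 0, where S is the heat kernel) is well-defined, continuous, and satisfies sup_{x ∈ ℝ^k} g(x) = g(0) = C t^{-β/2}, where C = ∫_{ℝ^k} ‖w‖^{-β} S(1, w) dw. -/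
open Real MeasureTheory

section Aux

open Set

variable {k : ℕ}

lemma heatKernel_continuous (k : ℕ) (t : ℝ) : Continuous (heatKernel k t) := by
  unfold heatKernel
  fun_prop

lemma heatKernel_nonneg (k : ℕ) {t : ℝ} (ht : 0 < t) (x : EuclideanSpace ℝ (Fin k)) :
    0 ≤ heatKernel k t x :=
  (mul_pos (Real.rpow_pos_of_pos (by positivity) _) (Real.exp_pos _)).le

lemma heatKernel_zero_sub (k : ℕ) (t : ℝ) (z : EuclideanSpace ℝ (Fin k)) :
    heatKernel k t (0 - z) = heatKernel k t z := by
  unfold heatKernel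
  rw [zero_sub, norm_neg]

lemma subord {β : ℝ} (hβ : 0 < β) {r : ℝ} (hr : 0 < r) :
    ∫⁻ u in Ioi (0:ℝ), ENNReal.ofReal (u ^ (β/2 - 1) * Real.exp (-(r^2 * u)))
      = ENNReal.ofReal (Real.Gamma (β/2) * r ^ (-β)) := by
  have hint : IntegrableOn (fun u : ℝ => u ^ (β/2 - 1) * Real.exp (-(r^2 * u))) (Ioi 0) := by
    have := integrableOn_rpow_mul_exp_neg_mul_rpow (s := β/2 - 1) (p := 1) (b := r^2)
      (by linarith [hβ]) one_pos (by positivity)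
    refine this.congr_fun (fun u hu => ?_) measurableSet_Ioi
    simp only [Real.rpow_one, neg_mul]
  rw [← ofReal_integral_eq_lintegral_ofReal hint]
  · congr 1
    rw [integral_rpow_mul_exp_neg_mul_Ioi (by linarith : 0 < β/2) (by positivity : 0 < r^2)]
    rw [one_div, ← Real.rpow_natCast r 2, ← Real.rpow_neg hr.le, ← Real.rpow_mul hr.le]
    norm_num
    ring_nf
  · filter_upwards [ae_restrict_mem measurableSet_Ioi] with u hu
    have : (0:ℝ) < u := hu
    positivity

lemma gauss_int {a : ℝ} (ha : 0 < a) :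
    Integrable (fun z : EuclideanSpace ℝ (Fin k) => Real.exp (-(‖z‖^2 * a))) := by
  have h := GaussianFourier.integrable_cexp_neg_mul_sq_norm_add
    (V := EuclideanSpace ℝ (Fin k)) (b := (a:ℂ)) (by simpa using ha) 0 0
  have := h.norm
  refine this.congr (Filter.Eventually.of_forall fun z => ?_)
  simp only [Complex.norm_exp, mul_zero, zero_mul, add_zero,
    ← Complex.ofReal_pow, ← Complex.ofReal_neg, ← Complex.ofReal_mul, Complex.ofReal_re]
  ring_nf

lemma gauss_lint {a : ℝ} (ha : 0 < a) :
    ∫⁻ z : EuclideanSpace ℝ (Fin k), ENNReal.ofReal (Real.exp (-(‖z‖^2 * a)))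
      = ENNReal.ofReal ((Real.pi / a) ^ ((k:ℝ)/2)) := by
  rw [← ofReal_integral_eq_lintegral_ofReal (gauss_int ha)
    (Filter.Eventually.of_forall fun z => (Real.exp_pos _).le)]
  congr 1
  have := GaussianFourier.integral_rexp_neg_mul_sq_norm (V := EuclideanSpace ℝ (Fin k)) ha
  rw [show (fun z : EuclideanSpace ℝ (Fin k) => Real.exp (-(‖z‖^2 * a)))
      = fun v : EuclideanSpace ℝ (Fin k) => Real.exp (-a * ‖v‖^2) from funext fun z => by ring_nf,
    this, finrank_euclideanSpace_fin]

lemma rep {β : ℝ} (hβ : 0 < β) (hk : 1 ≤ k) (W : EuclideanSpace ℝ (Fin k) → ℝ)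
    (hW : Measurable W) (hWnn : ∀ z, 0 ≤ W z) :
    ENNReal.ofReal (Real.Gamma (β/2)) *
        ∫⁻ z : EuclideanSpace ℝ (Fin k), ENNReal.ofReal (‖z‖ ^ (-β) * W z)
      = ∫⁻ u in Ioi (0:ℝ), ENNReal.ofReal (u ^ (β/2 - 1)) *
          ∫⁻ z : EuclideanSpace ℝ (Fin k), ENNReal.ofReal (Real.exp (-(‖z‖^2 * u)) * W z) := by
  haveI : Nonempty (Fin k) := ⟨⟨0, hk⟩⟩
  have hΓ : (0:ℝ) ≤ Real.Gamma (β/2) := (Real.Gamma_pos_of_pos (by linarith)).le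
  rw [← lintegral_const_mul' _ _ ENNReal.ofReal_ne_top]
  have h0 : ∀ᵐ z : EuclideanSpace ℝ (Fin k), z ≠ 0 := by
    haveI : NullSingletonClass (volume : Measure (EuclideanSpace ℝ (Fin k))) := by infer_instance
    rw [ae_iff]
    have hset : {z : EuclideanSpace ℝ (Fin k) | ¬ z ≠ 0} = {0} := by ext z; simp
    rw [hset]
    exact measure_singleton 0
  have step1 : ∀ᵐ z : EuclideanSpace ℝ (Fin k),
      ENNReal.ofReal (Real.Gamma (β/2)) * ENNReal.ofReal (‖z‖ ^ (-β) * W z)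
        = ∫⁻ u in Ioi (0:ℝ),
            ENNReal.ofReal (u ^ (β/2 - 1) * Real.exp (-(‖z‖^2 * u)) * W z) := by
    filter_upwards [h0] with z hz
    have hr : 0 < ‖z‖ := norm_pos_iff.2 hz
    have hmul : ∀ u : ℝ, ENNReal.ofReal (u ^ (β/2-1) * Real.exp (-(‖z‖^2*u)) * W z)
        = ENNReal.ofReal (u ^ (β/2-1) * Real.exp (-(‖z‖^2*u))) * ENNReal.ofReal (W z) :=
      fun u => ENNReal.ofReal_mul' (hWnn z)
    simp_rw [hmul]
    rw [lintegral_mul_const' _ _ ENNReal.ofReal_ne_top, subord hβ hr,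
      ← ENNReal.ofReal_mul (mul_nonneg hΓ (Real.rpow_nonneg (norm_nonneg z) _)),
      ← ENNReal.ofReal_mul hΓ, mul_assoc]
  rw [lintegral_congr_ae step1]
  have hmeas : Measurable fun p : EuclideanSpace ℝ (Fin k) × ℝ =>
      ENNReal.ofReal (p.2 ^ (β/2-1) * Real.exp (-(‖p.1‖^2 * p.2)) * W p.1) := by
    fun_prop
  rw [lintegral_lintegral_swap hmeas.aemeasurable]
  refine lintegral_congr_ae ?_
  filter_upwards [ae_restrict_mem measurableSet_Ioi] with u hu
  have hu' : (0:ℝ) < u := hu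
  have h1 : ∀ z : EuclideanSpace ℝ (Fin k),
      ENNReal.ofReal (u ^ (β/2-1) * Real.exp (-(‖z‖^2*u)) * W z)
        = ENNReal.ofReal (u ^ (β/2-1)) * ENNReal.ofReal (Real.exp (-(‖z‖^2*u)) * W z) :=
    fun z => by rw [mul_assoc, ENNReal.ofReal_mul (Real.rpow_nonneg hu'.le _)]
  simp_rw [h1]
  rw [lintegral_const_mul' _ _ ENNReal.ofReal_ne_top]

lemma oneDfin {β : ℝ} (hβ : 0 < β) (hβk : β < k) {c : ℝ} (hc : 0 < c) :
    ∫⁻ u in Ioi (0:ℝ), ENNReal.ofReal (u ^ (β/2 - 1)) *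
        ENNReal.ofReal ((Real.pi / (u + c)) ^ ((k:ℝ)/2)) < ⊤ := by
  have key : ∀ (S : Set ℝ), MeasurableSet S → ∀ (h : ℝ → ℝ), IntegrableOn h S →
      (∀ u ∈ S, ENNReal.ofReal (u ^ (β/2 - 1)) *
        ENNReal.ofReal ((Real.pi / (u + c)) ^ ((k:ℝ)/2)) ≤ ENNReal.ofReal (h u)) →
      ∫⁻ u in S, ENNReal.ofReal (u ^ (β/2 - 1)) *
        ENNReal.ofReal ((Real.pi / (u + c)) ^ ((k:ℝ)/2)) < ⊤ := by
    intro S hS h hint hle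
    calc ∫⁻ u in S, ENNReal.ofReal (u ^ (β/2 - 1)) *
          ENNReal.ofReal ((Real.pi / (u + c)) ^ ((k:ℝ)/2))
        ≤ ∫⁻ u in S, ‖h u‖₊ := setLIntegral_mono' hS
            (fun u hu => (hle u hu).trans (Real.ofReal_le_enorm _))
      _ < ⊤ := hint.2
  have hsplit : (Ioi (0:ℝ)) = Ioc (0:ℝ) 1 ∪ Ioi 1 := (Ioc_union_Ioi_eq_Ioi zero_le_one).symm
  rw [hsplit, lintegral_union measurableSet_Ioi Ioc_disjoint_Ioi_same]
  refine ENNReal.add_lt_top.2 ⟨?_, ?_⟩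
  · refine key _ measurableSet_Ioc (fun u => u ^ (β/2 - 1) * (Real.pi / c) ^ ((k:ℝ)/2)) ?_ ?_
    · exact (intervalIntegral.intervalIntegrable_rpow' (a := 0) (b := 1)
        (by linarith)).1.mul_const _
    · intro u hu
      rw [ENNReal.ofReal_mul (Real.rpow_nonneg hu.1.le _)]
      refine mul_le_mul_of_nonneg_left (ENNReal.ofReal_le_ofReal ?_) zero_le
      refine Real.rpow_le_rpow (by have := hu.1; positivity) ?_ (by positivity)
      gcongr <;> linarith [hu.1]
  · refine key _ measurableSet_Ioi (fun u => Real.pi ^ ((k:ℝ)/2) * u ^ (β/2 - 1 - (k:ℝ)/2)) ?_ ?_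
    · refine Integrable.const_mul ?_ _
      refine integrableOn_Ioi_rpow_of_lt ?_ one_pos
      have hk1 : (1:ℝ) ≤ (k:ℝ) := by
        have : 0 < (k:ℝ) := lt_of_le_of_lt hβ.le hβk
        exact_mod_cast Nat.one_le_cast.2 (by exact_mod_cast this)
      linarith
    · intro u hu
      have hu1 : (1:ℝ) < u := hu
      have hu0 : (0:ℝ) < u := by linarith
      rw [← ENNReal.ofReal_mul (Real.rpow_nonneg hu0.le _)]
      refine ENNReal.ofReal_le_ofReal ?_
      calc u ^ (β/2-1) * (Real.pi/(u+c)) ^ ((k:ℝ)/2)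
          ≤ u ^ (β/2-1) * (Real.pi/u) ^ ((k:ℝ)/2) := by
            refine mul_le_mul_of_nonneg_left ?_ (Real.rpow_nonneg hu0.le _)
            refine Real.rpow_le_rpow (by positivity) ?_ (by positivity)
            gcongr <;> linarith
        _ = Real.pi ^ ((k:ℝ)/2) * u ^ (β/2 - 1 - (k:ℝ)/2) := by
            rw [Real.div_rpow Real.pi_pos.le hu0.le,
              show β/2 - 1 - (k:ℝ)/2 = (β/2-1) + (-((k:ℝ)/2)) by ring,
              Real.rpow_add hu0, Real.rpow_neg hu0.le]
            ring

lemma corefin {β : ℝ} (hβ : 0 < β) (hβk : β < k) (hk : 1 ≤ k) {b : ℝ} (hb : 0 < b) :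
    ∫⁻ z : EuclideanSpace ℝ (Fin k),
        ENNReal.ofReal (‖z‖ ^ (-β) * Real.exp (-(‖z‖^2 * b))) < ⊤ := by
  have hrep := rep hβ hk (fun z => Real.exp (-(‖z‖^2 * b))) (by fun_prop)
    (fun z => (Real.exp_pos _).le)
  have hR : ∫⁻ u in Ioi (0:ℝ), ENNReal.ofReal (u ^ (β/2 - 1)) *
      ∫⁻ z : EuclideanSpace ℝ (Fin k),
        ENNReal.ofReal (Real.exp (-(‖z‖^2 * u)) * Real.exp (-(‖z‖^2 * b)))
      < ⊤ := by
    have hcong : ∀ u ∈ Ioi (0:ℝ), ENNReal.ofReal (u ^ (β/2 - 1)) *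
        (∫⁻ z : EuclideanSpace ℝ (Fin k),
          ENNReal.ofReal (Real.exp (-(‖z‖^2 * u)) * Real.exp (-(‖z‖^2 * b))))
        = ENNReal.ofReal (u ^ (β/2 - 1)) *
            ENNReal.ofReal ((Real.pi / (u + b)) ^ ((k:ℝ)/2)) := by
      intro u hu
      have hu0 : (0:ℝ) < u := hu
      congr 1
      rw [← gauss_lint (by positivity : (0:ℝ) < u + b)]
      congr 1; funext z
      rw [← Real.exp_add]
      congr 1; ring
    rw [setLIntegral_congr_fun measurableSet_Ioi hcong]
    exact oneDfin hβ hβk (by positivity)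
  rw [← hrep] at hR
  have hΓ : ENNReal.ofReal (Real.Gamma (β/2)) ≠ 0 := by
    simp only [ne_eq, ENNReal.ofReal_eq_zero, not_le]
    exact Real.Gamma_pos_of_pos (by linarith)
  by_contra hcon
  rw [not_lt, top_le_iff] at hcon
  rw [hcon, ENNReal.mul_top hΓ] at hR
  exact (lt_irrefl _ hR).elim

lemma shiftle {t : ℝ} (ht : 0 < t) {u : ℝ} (hu : 0 < u) (x : EuclideanSpace ℝ (Fin k)) :
    ∫⁻ z : EuclideanSpace ℝ (Fin k),
        ENNReal.ofReal (Real.exp (-(‖z‖^2 * u)) * heatKernel k t (x - z))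
      ≤ ∫⁻ z : EuclideanSpace ℝ (Fin k),
          ENNReal.ofReal (Real.exp (-(‖z‖^2 * u)) * heatKernel k t (0 - z)) := by
  have hs0 : (0:ℝ) < 2*t*u+1 := by positivity
  set s : ℝ := (2*t*u+1)⁻¹ with hs_def
  have hs : s * (2*t*u+1) = 1 := inv_mul_cancel₀ hs0.ne'
  have hsnn : 0 ≤ s := by positivity
  set c : EuclideanSpace ℝ (Fin k) := s • x with hc_def
  have key : ∀ z : EuclideanSpace ℝ (Fin k),
      Real.exp (-(‖z + c‖^2 * u)) * heatKernel k t (x - (z + c))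
        = Real.exp (-(u * s * ‖x‖^2)) *
            (Real.exp (-(‖z‖^2 * u)) * heatKernel k t (0 - z)) := by
    intro z
    unfold heatKernel
    rw [zero_sub, norm_neg]
    have hxz : x - (z + c) = (1 - s) • x - z := by
      rw [hc_def, sub_smul, one_smul]; abel
    rw [hxz]
    have hn1 : ‖z + c‖^2 = ‖z‖^2 + 2*(s * inner ℝ z x) + s^2*‖x‖^2 := by
      rw [hc_def, norm_add_sq_real, real_inner_smul_right, norm_smul, Real.norm_eq_abs,
        mul_pow, sq_abs]
    have hn2 : ‖(1-s) • x - z‖^2 = (1-s)^2*‖x‖^2 - 2*((1-s) * inner ℝ x z) + ‖z‖^2 := by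
      rw [norm_sub_sq_real, real_inner_smul_left, norm_smul, Real.norm_eq_abs, mul_pow, sq_abs]
    have hcomb : ∀ A B : ℝ, Real.exp A * ((2 * Real.pi * t) ^ (-(k : ℝ) / 2) * Real.exp B)
        = (2 * Real.pi * t) ^ (-(k : ℝ) / 2) * Real.exp (A + B) := by
      intro A B; rw [Real.exp_add]; ring
    rw [hcomb, hcomb, hcomb]
    congr 2
    rw [hn1, hn2, real_inner_comm z x]
    rw [hs_def]
    field_simp
    ring
  calc ∫⁻ z : EuclideanSpace ℝ (Fin k),
        ENNReal.ofReal (Real.exp (-(‖z‖^2 * u)) * heatKernel k t (x - z))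
      = ∫⁻ z : EuclideanSpace ℝ (Fin k),
          ENNReal.ofReal (Real.exp (-(‖z + c‖^2 * u)) * heatKernel k t (x - (z + c))) :=
        (lintegral_add_right_eq_self
          (fun z => ENNReal.ofReal (Real.exp (-(‖z‖^2 * u)) * heatKernel k t (x - z))) c).symm
    _ = ∫⁻ z : EuclideanSpace ℝ (Fin k), ENNReal.ofReal (Real.exp (-(u * s * ‖x‖^2))) *
          ENNReal.ofReal (Real.exp (-(‖z‖^2 * u)) * heatKernel k t (0 - z)) := by
        congr 1; funext z
        rw [key z, ENNReal.ofReal_mul (Real.exp_pos _).le]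
    _ = ENNReal.ofReal (Real.exp (-(u * s * ‖x‖^2))) * ∫⁻ z : EuclideanSpace ℝ (Fin k),
          ENNReal.ofReal (Real.exp (-(‖z‖^2 * u)) * heatKernel k t (0 - z)) :=
        lintegral_const_mul' _ _ ENNReal.ofReal_ne_top
    _ ≤ 1 * ∫⁻ z : EuclideanSpace ℝ (Fin k),
          ENNReal.ofReal (Real.exp (-(‖z‖^2 * u)) * heatKernel k t (0 - z)) := by
        refine mul_le_mul_of_nonneg_right ?_ zero_le
        refine ENNReal.ofReal_le_one.2 (Real.exp_le_one_iff.2 ?_)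
        have : 0 ≤ u * s * ‖x‖^2 := by positivity
        linarith
    _ = _ := one_mul _

lemma kernelfin {β : ℝ} (hβ : 0 < β) (hβk : β < k) (hk : 1 ≤ k) {t : ℝ} (ht : 0 < t) :
    ∫⁻ z : EuclideanSpace ℝ (Fin k),
        ENNReal.ofReal (‖z‖ ^ (-β) * heatKernel k t z) < ⊤ := by
  have hpt : ∀ z : EuclideanSpace ℝ (Fin k), ENNReal.ofReal (‖z‖^(-β) * heatKernel k t z)
      = ENNReal.ofReal ((2*Real.pi*t)^(-(k:ℝ)/2)) *
          ENNReal.ofReal (‖z‖^(-β) * Real.exp (-(‖z‖^2 * (2*t)⁻¹))) := by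
    intro z
    rw [← ENNReal.ofReal_mul (by positivity)]
    congr 1
    unfold heatKernel
    rw [show -‖z‖^2/(2*t) = -(‖z‖^2 * (2*t)⁻¹) by ring]
    ring
  simp_rw [hpt]
  rw [lintegral_const_mul' _ _ ENNReal.ofReal_ne_top]
  exact ENNReal.mul_lt_top ENNReal.ofReal_lt_top (corefin hβ hβk hk (by positivity))

lemma kernel_integrable {β : ℝ} (hβ : 0 < β) (hβk : β < k) (hk : 1 ≤ k) {t : ℝ} (ht : 0 < t) :
    Integrable (fun z : EuclideanSpace ℝ (Fin k) => ‖z‖ ^ (-β) * heatKernel k t z) := by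
  constructor
  · refine Measurable.aestronglyMeasurable ?_
    have := (heatKernel_continuous k t).measurable
    fun_prop
  · rw [hasFiniteIntegral_iff_norm]
    have hpt : ∀ z : EuclideanSpace ℝ (Fin k),
        ENNReal.ofReal ‖‖z‖ ^ (-β) * heatKernel k t z‖
          = ENNReal.ofReal (‖z‖ ^ (-β) * heatKernel k t z) := by
      intro z
      rw [Real.norm_eq_abs, abs_of_nonneg
        (mul_nonneg (Real.rpow_nonneg (norm_nonneg _) _) (heatKernel_nonneg k ht _))]
    simp_rw [hpt]
    exact kernelfin hβ hβk hk ht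

end Aux

theorem stmt_19 (k : ℕ) (hk : 1 ≤ k) (β : ℝ) (hβ : 0 < β) (hβ2 : β < min 2 (k : ℝ))
    (t : ℝ) (ht : 0 < t) :
    let g : EuclideanSpace ℝ (Fin k) → ℝ :=
      fun x => ∫ z : EuclideanSpace ℝ (Fin k), ‖z‖ ^ (-β) * heatKernel k t (x - z)
    Integrable (fun z : EuclideanSpace ℝ (Fin k) => ‖z‖ ^ (-β) * heatKernel k t z) ∧
    Continuous g ∧ (∀ x, g x ≤ g 0) ∧
    g 0 = (∫ w : EuclideanSpace ℝ (Fin k), ‖w‖ ^ (-β) * heatKernel k 1 w) * t ^ (-β / 2) := by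
  intro g
  have hβk : β < (k:ℝ) := lt_of_lt_of_le hβ2 (min_le_right _ _)
  have hK := heatKernel_continuous k t
  have hΓ0 : ENNReal.ofReal (Real.Gamma (β/2)) ≠ 0 := by
    simp only [ne_eq, ENNReal.ofReal_eq_zero, not_le]
    exact Real.Gamma_pos_of_pos (by linarith)
  have hmeasx : ∀ y : EuclideanSpace ℝ (Fin k),
      Measurable fun z : EuclideanSpace ℝ (Fin k) => ‖z‖ ^ (-β) * heatKernel k t (y - z) := by
    intro y
    have hm1 : Measurable fun z : EuclideanSpace ℝ (Fin k) => ‖z‖ ^ (-β) := by fun_prop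
    exact hm1.mul (hK.measurable.comp (measurable_const.sub measurable_id))
  have hnn : ∀ (y z : EuclideanSpace ℝ (Fin k)), 0 ≤ ‖z‖ ^ (-β) * heatKernel k t (y - z) :=
    fun y z => mul_nonneg (Real.rpow_nonneg (norm_nonneg _) _) (heatKernel_nonneg k ht _)
  refine ⟨kernel_integrable hβ hβk hk ht, ?_, ?_, ?_⟩
  · -- continuity
    refine continuous_iff_continuousAt.2 fun x₀ => ?_
    apply continuousAt_of_dominated (bound := fun z : EuclideanSpace ℝ (Fin k) =>
      ((2*Real.pi*t)^(-(k:ℝ)/2) * Real.exp ((‖x₀‖+1)^2 * (2*t)⁻¹)) *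
        (‖z‖^(-β) * Real.exp (-(‖z‖^2 * (4*t)⁻¹))))
    · exact Filter.Eventually.of_forall fun x => (hmeasx x).aestronglyMeasurable
    · filter_upwards [Metric.ball_mem_nhds x₀ one_pos] with x hx
      refine Filter.Eventually.of_forall fun z => ?_
      have hxR : ‖x‖ ≤ ‖x₀‖ + 1 := by
        have h1 : ‖x‖ - ‖x₀‖ ≤ ‖x - x₀‖ := norm_sub_norm_le x x₀
        have h2 : ‖x - x₀‖ < 1 := by rwa [← dist_eq_norm, ← Metric.mem_ball]
        linarith
      have hzn : ‖z‖ ≤ ‖x‖ + ‖x - z‖ := by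
        have := norm_sub_le x (x - z)
        simpa using this
      have hz2 : ‖z‖^2 ≤ 2*(‖x₀‖+1)^2 + 2*‖x-z‖^2 := by
        nlinarith [sq_nonneg ((‖x₀‖+1) - ‖x-z‖), norm_nonneg z, norm_nonneg (x-z)]
      have hexp : Real.exp (-‖x-z‖^2/(2*t)) ≤
          Real.exp ((‖x₀‖+1)^2 * (2*t)⁻¹) * Real.exp (-(‖z‖^2 * (4*t)⁻¹)) := by
        rw [← Real.exp_add]
        refine Real.exp_le_exp.2 ?_
        have hdiff : (‖x₀‖+1)^2*(2*t)⁻¹ + -(‖z‖^2*(4*t)⁻¹) - (-‖x-z‖^2/(2*t))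
            = (2*(‖x₀‖+1)^2 + 2*‖x-z‖^2 - ‖z‖^2) * (4*t)⁻¹ := by
          field_simp
          ring
        have hnn2 : 0 ≤ (2*(‖x₀‖+1)^2 + 2*‖x-z‖^2 - ‖z‖^2) * (4*t)⁻¹ :=
          mul_nonneg (by linarith) (by positivity)
        linarith
      rw [Real.norm_eq_abs, abs_of_nonneg (hnn x z)]
      show ‖z‖^(-β) * heatKernel k t (x - z) ≤ _
      unfold heatKernel
      calc ‖z‖^(-β) * ((2*Real.pi*t)^(-(k:ℝ)/2) * Real.exp (-‖x-z‖^2/(2*t)))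
          ≤ ‖z‖^(-β) * ((2*Real.pi*t)^(-(k:ℝ)/2) * (Real.exp ((‖x₀‖+1)^2 * (2*t)⁻¹) *
              Real.exp (-(‖z‖^2 * (4*t)⁻¹)))) := by
            refine mul_le_mul_of_nonneg_left ?_ (Real.rpow_nonneg (norm_nonneg _) _)
            exact mul_le_mul_of_nonneg_left hexp (by positivity)
        _ = _ := by ring
    · refine Integrable.const_mul ?_ _
      constructor
      · refine Measurable.aestronglyMeasurable ?_
        fun_prop
      · rw [hasFiniteIntegral_iff_norm]
        have hpt : ∀ z : EuclideanSpace ℝ (Fin k),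
            ENNReal.ofReal ‖‖z‖^(-β) * Real.exp (-(‖z‖^2 * (4*t)⁻¹))‖
              = ENNReal.ofReal (‖z‖^(-β) * Real.exp (-(‖z‖^2 * (4*t)⁻¹))) := fun z => by
          rw [Real.norm_eq_abs, abs_of_nonneg (mul_nonneg
            (Real.rpow_nonneg (norm_nonneg _) _) (Real.exp_pos _).le)]
        simp_rw [hpt]
        exact corefin hβ hβk hk (by positivity)
    · refine Filter.Eventually.of_forall fun z => ?_
      exact (continuous_const.mul (hK.comp (continuous_id.sub continuous_const))).continuousAt
  · -- max at 0
    intro x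
    have hgy : ∀ y : EuclideanSpace ℝ (Fin k), g y = (∫⁻ z : EuclideanSpace ℝ (Fin k),
        ENNReal.ofReal (‖z‖ ^ (-β) * heatKernel k t (y - z))).toReal := fun y =>
      integral_eq_lintegral_of_nonneg_ae (Filter.Eventually.of_forall (hnn y))
        (hmeasx y).aestronglyMeasurable
    rw [hgy x, hgy 0]
    have hL0eq : (∫⁻ z : EuclideanSpace ℝ (Fin k),
        ENNReal.ofReal (‖z‖ ^ (-β) * heatKernel k t (0 - z)))
        = ∫⁻ z : EuclideanSpace ℝ (Fin k), ENNReal.ofReal (‖z‖ ^ (-β) * heatKernel k t z) :=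
      lintegral_congr fun z => by rw [heatKernel_zero_sub]
    have hL0fin : (∫⁻ z : EuclideanSpace ℝ (Fin k),
        ENNReal.ofReal (‖z‖ ^ (-β) * heatKernel k t (0 - z))) ≠ ⊤ := by
      rw [hL0eq]
      exact (kernelfin hβ hβk hk ht).ne
    refine ENNReal.toReal_mono hL0fin ?_
    have hr1 := rep hβ hk (fun z => heatKernel k t (x - z))
      (hK.measurable.comp (measurable_const.sub measurable_id)) (fun z => heatKernel_nonneg k ht _)
    have hr0 := rep hβ hk (fun z => heatKernel k t (0 - z))
      (hK.measurable.comp (measurable_const.sub measurable_id)) (fun z => heatKernel_nonneg k ht _)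
    have hmono : (∫⁻ u in Set.Ioi (0:ℝ), ENNReal.ofReal (u ^ (β/2 - 1)) *
          ∫⁻ z : EuclideanSpace ℝ (Fin k),
            ENNReal.ofReal (Real.exp (-(‖z‖^2 * u)) * heatKernel k t (x - z)))
        ≤ ∫⁻ u in Set.Ioi (0:ℝ), ENNReal.ofReal (u ^ (β/2 - 1)) *
          ∫⁻ z : EuclideanSpace ℝ (Fin k),
            ENNReal.ofReal (Real.exp (-(‖z‖^2 * u)) * heatKernel k t (0 - z)) :=
      setLIntegral_mono' measurableSet_Ioi fun u hu =>
        mul_le_mul_of_nonneg_left (shiftle ht hu x) zero_le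
    have hfinal := hr1.trans_le (hmono.trans_eq hr0.symm)
    exact (ENNReal.mul_le_mul_iff_right hΓ0 ENNReal.ofReal_ne_top).1 hfinal
  · -- scaling
    have hzs : g 0 = ∫ z : EuclideanSpace ℝ (Fin k), ‖z‖^(-β) * heatKernel k t z := by
      show (∫ z : EuclideanSpace ℝ (Fin k), ‖z‖ ^ (-β) * heatKernel k t (0 - z)) = _
      congr 1; funext z; rw [heatKernel_zero_sub]
    rw [hzs]
    have hcs := MeasureTheory.Measure.integral_comp_smul_of_nonneg (volume)
      (fun z : EuclideanSpace ℝ (Fin k) => ‖z‖^(-β) * heatKernel k t z) (Real.sqrt t)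
      (hR := Real.sqrt_nonneg t)
    have hpt : ∀ w : EuclideanSpace ℝ (Fin k),
        ‖Real.sqrt t • w‖^(-β) * heatKernel k t (Real.sqrt t • w)
          = (t ^ (-β/2) * t ^ (-(k:ℝ)/2)) * (‖w‖^(-β) * heatKernel k 1 w) := by
      intro w
      unfold heatKernel
      rw [norm_smul, Real.norm_eq_abs, abs_of_nonneg (Real.sqrt_nonneg t),
        Real.mul_rpow (Real.sqrt_nonneg t) (norm_nonneg w),
        show Real.sqrt t ^ (-β) = t ^ (-β/2) by
          rw [Real.sqrt_eq_rpow, ← Real.rpow_mul ht.le]; congr 1; ring,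
        show (Real.sqrt t * ‖w‖)^2 = t * ‖w‖^2 by rw [mul_pow, Real.sq_sqrt ht.le],
        show (2*Real.pi*t) ^ (-(k:ℝ)/2) = t^(-(k:ℝ)/2) * (2*Real.pi*1)^(-(k:ℝ)/2) by
          rw [mul_one, show (2*Real.pi*t) = (2*Real.pi)*t by ring,
            Real.mul_rpow (by positivity) ht.le]; ring,
        show -(t*‖w‖^2)/(2*t) = -‖w‖^2/(2*1) by field_simp]
      ring
    have lhs_eq : (∫ w : EuclideanSpace ℝ (Fin k),
        (fun z : EuclideanSpace ℝ (Fin k) => ‖z‖^(-β) * heatKernel k t z) (Real.sqrt t • w))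
        = (t ^ (-β/2) * t ^ (-(k:ℝ)/2)) *
            ∫ w : EuclideanSpace ℝ (Fin k), ‖w‖^(-β) * heatKernel k 1 w := by
      simp_rw [hpt, ← smul_eq_mul]
      exact integral_smul _ _
    have hrhs : ((Real.sqrt t) ^ (Module.finrank ℝ (EuclideanSpace ℝ (Fin k))))⁻¹
        = t ^ (-(k:ℝ)/2) := by
      rw [finrank_euclideanSpace_fin, ← Real.rpow_natCast (Real.sqrt t) k, Real.sqrt_eq_rpow,
        ← Real.rpow_mul ht.le, ← Real.rpow_neg ht.le]
      congr 1; ring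
    rw [lhs_eq, hrhs, smul_eq_mul] at hcs
    have hne : t ^ (-(k:ℝ)/2) ≠ 0 := (Real.rpow_pos_of_pos ht _).ne'
    apply mul_left_cancel₀ hne
    rw [← hcs]
    ring
end
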